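/- The q-Fibonacci polynomials, defined by F_n(x,s) = f_n(x + (q−1)s·D_q, s)·1 via operator substitution into the Fibonacci recurrence, have the explicit formula F_n(x,s) = Σ_{k=0}^{⌊(n−1)/2⌋} q^{C(k+1,2)}·qbinom(n−1−k, k)·s^k·x^{n−1−2k} for n ≥ 1, with F_0 = 0. -/

import Mathlib

open Polynomial

noncomputable section

abbrev Kq : Type := RatFunc ℚ
def q : Kq := RatFunc.X
abbrev Ks : Type := Polynomial Kq
abbrev Ax : Type := Polynomial Ks
def qInt (n : ℕ) : Kq := ∑ i ∈ Finset.range n, q ^ i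
def qFact (n : ℕ) : Kq := ∏ i ∈ Finset.range n, qInt (i + 1)
def qChoose (n k : ℕ) : Kq := qFact n / (qFact k * qFact (n - k))
def qDeriv (p : Ax) : Ax :=
  p.sum fun m a => Polynomial.C a * Polynomial.C (Polynomial.C (qInt m)) * X ^ (m - 1)

lemma geom (n : ℕ) : (q - 1) * qInt n = q ^ n - 1 := by
  rw [qInt, mul_comm, geom_sum_mul]

lemma q_pow_ne_one {n : ℕ} (hn : 1 ≤ n) : q ^ n ≠ 1 := by
  intro h
  have : (Polynomial.X : Polynomial ℚ) ^ n = 1 := by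
    apply RatFunc.algebraMap_injective ℚ
    simpa [q, RatFunc.algebraMap_X] using h
  have := congrArg Polynomial.natDegree this
  simp [Polynomial.natDegree_X_pow] at this
  omega

lemma qInt_ne_zero {n : ℕ} (hn : 1 ≤ n) : qInt n ≠ 0 := by
  intro h
  have := geom n
  rw [h, mul_zero] at this
  exact q_pow_ne_one hn (sub_eq_zero.mp this.symm)

lemma qInt_one : qInt 1 = 1 := by simp [qInt]

lemma qInt_add (a b : ℕ) : qInt (a + b) = qInt a + q ^ a * qInt b := by
  rw [qInt, Finset.sum_range_add, qInt, qInt, Finset.mul_sum]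
  simp [pow_add]

lemma qFact_succ (n : ℕ) : qFact (n + 1) = qFact n * qInt (n + 1) := by
  rw [qFact, Finset.prod_range_succ, qFact]

lemma qFact_zero : qFact 0 = 1 := by simp [qFact]

lemma qFact_ne_zero (n : ℕ) : qFact n ≠ 0 := by
  induction n with
  | zero => simp [qFact_zero]
  | succ n ih => rw [qFact_succ]; exact mul_ne_zero ih (qInt_ne_zero (by omega))

lemma qChoose_eq (a b : ℕ) : qChoose (a + b) a = qFact (a + b) / (qFact a * qFact b) := by
  rw [qChoose, Nat.add_sub_cancel_left]

lemma qChoose_zero (n : ℕ) : qChoose n 0 = 1 := by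
  rw [qChoose, qFact_zero, one_mul, Nat.sub_zero, div_self (qFact_ne_zero _)]

lemma qChoose_self (n : ℕ) : qChoose n n = 1 := by
  rw [qChoose, Nat.sub_self, qFact_zero, mul_one, div_self (qFact_ne_zero _)]

lemma qChoose_succ_self (m : ℕ) : qChoose (m + 1) m = qInt (m + 1) := by
  rw [qChoose, Nat.add_sub_cancel_left, qFact_succ]
  rw [show qFact 1 = 1 by rw [qFact, Finset.prod_range_one, qInt_one], mul_one]
  rw [mul_comm, mul_div_assoc, div_self (qFact_ne_zero _), mul_one]


lemma key (j a : ℕ) :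
    q ^ (j+1) * qChoose (j+a+2) (j+1) =
      q ^ (j+1) * qChoose (j+a+1) (j+1) + (q ^ (a+2) - 1) * qChoose (j+a+2) j
        + qChoose (j+a+1) j := by
  have e1 : qChoose (j+a+2) (j+1) = qFact (j+a+2) / (qFact (j+1) * qFact (a+1)) := by
    rw [show j+a+2 = (j+1)+(a+1) by ring] ; exact qChoose_eq _ _
  have e2 : qChoose (j+a+1) (j+1) = qFact (j+a+1) / (qFact (j+1) * qFact a) := by
    rw [show j+a+1 = (j+1)+a by ring] ; exact qChoose_eq _ _
  have e3 : qChoose (j+a+2) j = qFact (j+a+2) / (qFact j * qFact (a+2)) := by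
    rw [show j+a+2 = j+(a+2) by ring] ; exact qChoose_eq _ _
  have e4 : qChoose (j+a+1) j = qFact (j+a+1) / (qFact j * qFact (a+1)) := by
    rw [show j+a+1 = j+(a+1) by ring] ; exact qChoose_eq _ _
  rw [e1, e2, e3, e4]
  rw [show qFact (j+a+2) = qFact (j+a+1) * qInt (j+a+2) from qFact_succ (j+a+1),
      show qFact (j+1) = qFact j * qInt (j+1) from qFact_succ j,
      show qFact (a+2) = qFact a * qInt (a+1) * qInt (a+2) by
        rw [qFact_succ (a+1), qFact_succ a],
      show qFact (a+1) = qFact a * qInt (a+1) from qFact_succ a]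
  have hA : qInt (j+a+2) = qInt (j+1) + q ^ (j+1) * qInt (a+1) := by
    rw [show j+a+2 = (j+1)+(a+1) by ring] ; exact qInt_add _ _
  have ht : q ^ (j+1) = (q - 1) * qInt (j+1) + 1 := by rw [geom] ; ring
  have hr : q ^ (a+2) = (q - 1) * qInt (a+2) + 1 := by rw [geom] ; ring
  have n1 := qFact_ne_zero j
  have n2 := qFact_ne_zero a
  have n3 := qFact_ne_zero (j+a+1)
  have n4 := qInt_ne_zero (show 1 ≤ j+1 by omega)
  have n5 := qInt_ne_zero (show 1 ≤ a+1 by omega)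
  have n6 := qInt_ne_zero (show 1 ≤ a+2 by omega)
  set G := qFact j with hG
  set H := qFact a with hH
  set P := qFact (j+a+1) with hP
  set u := qInt (j+1) with hu
  set v := qInt (a+1) with hv
  set w := qInt (a+2) with hw
  rw [hA, ht, hr]
  have d1 : G * u * (H * v) ≠ 0 := by
    exact mul_ne_zero (mul_ne_zero n1 n4) (mul_ne_zero n2 n5)
  have d2 : G * u * H ≠ 0 := mul_ne_zero (mul_ne_zero n1 n4) n2
  have d3 : G * (H * v * w) ≠ 0 := mul_ne_zero n1 (mul_ne_zero (mul_ne_zero n2 n5) n6)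
  have d4 : G * (H * v) ≠ 0 := mul_ne_zero n1 (mul_ne_zero n2 n5)
  simp only [mul_div_assoc']
  rw [div_add_div _ _ d2 d3, div_add_div _ _ (mul_ne_zero d2 d3) d4,
    div_eq_div_iff d1 (mul_ne_zero (mul_ne_zero d2 d3) d4)]
  ring

def mono (a : Kq) (k e : ℕ) : Ax :=
  Polynomial.C (Polynomial.C a * Polynomial.X ^ k) * Polynomial.X ^ e

lemma qDeriv_zero : qDeriv 0 = 0 := Polynomial.sum_zero_index _

lemma qDeriv_f_zero (m : ℕ) :
    Polynomial.C (0 : Ks) * Polynomial.C (Polynomial.C (qInt m)) * (Polynomial.X : Ax) ^ (m - 1) = 0 := by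
  simp

lemma qDeriv_add (p r : Ax) : qDeriv (p + r) = qDeriv p + qDeriv r := by
  apply Polynomial.sum_add_index
  · intro i; simp
  · intro i b c; simp [add_mul]

lemma qDeriv_sum {ι : Type*} (s : Finset ι) (g : ι → Ax) :
    qDeriv (∑ i ∈ s, g i) = ∑ i ∈ s, qDeriv (g i) := by
  classical
  induction s using Finset.induction_on with
  | empty => simp [qDeriv_zero]
  | insert a t h ih => rw [Finset.sum_insert h, Finset.sum_insert h, qDeriv_add, ih]

lemma qDeriv_mono (a : Kq) (k e : ℕ) :
    qDeriv (mono a k e) = mono (qInt e * a) k (e - 1) := by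
  rw [mono, Polynomial.C_mul_X_pow_eq_monomial, qDeriv,
    Polynomial.sum_monomial_index _ _ (by simp)]
  rw [mono, ← map_mul]
  congr 2
  rw [map_mul]
  ring

lemma X_mul_mono (a : Kq) (k e : ℕ) : (Polynomial.X : Ax) * mono a k e = mono a k (e + 1) := by
  rw [mono, mono]; ring

lemma s_mul_mono (a : Kq) (k e : ℕ) :
    Polynomial.C (Polynomial.X : Ks) * mono a k e = mono a (k + 1) e := by
  rw [mono, mono, ← mul_assoc, ← map_mul]
  congr 2
  ring

lemma qs_mul_mono (a : Kq) (k e : ℕ) :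
    Polynomial.C ((Polynomial.C q - 1) * (Polynomial.X : Ks)) * mono a k e =
      mono ((q - 1) * a) (k + 1) e := by
  rw [mono, mono, ← mul_assoc, ← map_mul]
  congr 2
  rw [map_mul, map_sub, Polynomial.C_1]
  ring

lemma mono_add (a b : Kq) (k e : ℕ) : mono (a + b) k e = mono a k e + mono b k e := by
  rw [mono, mono, mono, ← add_mul, ← map_add, map_add, add_mul]

lemma mono_zero_coeff (k e : ℕ) : mono 0 k e = 0 := by simp [mono]

def S (n : ℕ) : Ax :=
  ∑ k ∈ Finset.range ((n - 1) / 2 + 1),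
    mono (q ^ ((k + 1).choose 2) * qChoose (n - 1 - k) k) k (n - 1 - 2 * k)

lemma S_odd (m : ℕ) : S (2 * m + 1) =
    ∑ k ∈ Finset.range (m + 1),
      mono (q ^ ((k + 1).choose 2) * qChoose (2 * m - k) k) k (2 * m - 2 * k) := by
  rw [S, show (2 * m + 1 - 1) / 2 + 1 = m + 1 by omega,
    show 2 * m + 1 - 1 = 2 * m by omega]

lemma S_even (m : ℕ) : S (2 * m + 2) =
    ∑ k ∈ Finset.range (m + 1),
      mono (q ^ ((k + 1).choose 2) * qChoose (2 * m + 1 - k) k) k (2 * m + 1 - 2 * k) := by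
  rw [S, show (2 * m + 2 - 1) / 2 + 1 = m + 1 by omega,
    show 2 * m + 2 - 1 = 2 * m + 1 by omega]

lemma choose2_succ (n : ℕ) : (n + 1).choose 2 = n.choose 2 + n := by
  simp [Nat.choose_succ_succ n 1, Nat.choose_one_right, Nat.add_comm]

lemma Srec (N : ℕ) (hN : 1 ≤ N) :
    S (N + 2) = Polynomial.X * S (N + 1) +
      Polynomial.C ((Polynomial.C q - 1) * Polynomial.X) * qDeriv (S (N + 1)) +
      Polynomial.C (Polynomial.X : Ks) * S N := by
  obtain ⟨m, rfl | rfl⟩ : ∃ m, N = 2 * m + 1 ∨ N = 2 * m + 2 := by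
    rcases Nat.even_or_odd N with ⟨m, hm⟩ | ⟨m, hm⟩
    · exact ⟨m - 1, Or.inr (by omega)⟩
    · exact ⟨m, Or.inl (by omega)⟩
  · rw [show 2 * m + 1 + 2 = 2 * (m + 1) + 1 by ring, show 2 * m + 1 + 1 = 2 * m + 2 by ring,
      S_odd (m + 1), S_even m, S_odd m]
    simp only [qDeriv_sum, Finset.mul_sum, X_mul_mono, qDeriv_mono, qs_mul_mono, s_mul_mono]
    rw [Finset.sum_range_succ' _ (m + 1), Finset.sum_range_succ]
    conv_rhs => rw [Finset.sum_range_succ' _ m, Finset.sum_range_succ, Finset.sum_range_succ]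
    have h0 : mono (q ^ (0 + 1).choose 2 * qChoose (2 * (m + 1) - 0) 0) 0 (2 * (m + 1) - 2 * 0)
        = mono (q ^ (0 + 1).choose 2 * qChoose (2 * m + 1 - 0) 0) 0 (2 * m + 1 - 2 * 0 + 1) := by
      rw [show 2 * (m + 1) - 0 = 2 * m + 2 by omega, show 2 * m + 1 - 0 = 2 * m + 1 by omega,
        show 2 * m + 1 + 1 = 2 * m + 2 by omega, qChoose_zero, qChoose_zero]
    have hedge : mono (q ^ (m + 1 + 1).choose 2 * qChoose (2 * (m + 1) - (m + 1)) (m + 1)) (m + 1)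
          (2 * (m + 1) - 2 * (m + 1))
        = mono ((q - 1) * (qInt (2 * m + 1 - 2 * m) * (q ^ (m + 1).choose 2 * qChoose (2 * m + 1 - m) m)))
            (m + 1) (2 * m + 1 - 2 * m - 1)
          + mono (q ^ (m + 1).choose 2 * qChoose (2 * m - m) m) (m + 1) (2 * m - 2 * m) := by
      rw [show 2 * (m + 1) - (m + 1) = m + 1 by omega, show 2 * (m + 1) - 2 * (m + 1) = 0 by omega,
        show 2 * m + 1 - 2 * m - 1 = 0 by omega, show 2 * m + 1 - 2 * m = 1 by omega,
        show 2 * m + 1 - m = m + 1 by omega, show 2 * m - 2 * m = 0 by omega,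
        show 2 * m - m = m by omega, qChoose_self, qChoose_self, qChoose_succ_self, qInt_one,
        ← mono_add]
      congr 1
      rw [choose2_succ (m + 1), pow_add]
      linear_combination (-(q ^ ((m + 1).choose 2))) * geom (m + 1)
    have hmain : ∀ k ∈ Finset.range m,
        mono (q ^ (k + 1 + 1).choose 2 * qChoose (2 * (m + 1) - (k + 1)) (k + 1)) (k + 1)
          (2 * (m + 1) - 2 * (k + 1))
        = mono (q ^ (k + 1 + 1).choose 2 * qChoose (2 * m + 1 - (k + 1)) (k + 1)) (k + 1)
            (2 * m + 1 - 2 * (k + 1) + 1)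
          + mono ((q - 1) * (qInt (2 * m + 1 - 2 * k) * (q ^ (k + 1).choose 2 * qChoose (2 * m + 1 - k) k)))
              (k + 1) (2 * m + 1 - 2 * k - 1)
          + mono (q ^ (k + 1).choose 2 * qChoose (2 * m - k) k) (k + 1) (2 * m - 2 * k) := by
      intro k hk
      rw [Finset.mem_range] at hk
      obtain ⟨d, rfl⟩ : ∃ d, m = k + 1 + d := ⟨m - k - 1, by omega⟩
      rw [show 2 * (k + 1 + d + 1) - (k + 1) = k + 2 * d + 3 by omega,
        show 2 * (k + 1 + d + 1) - 2 * (k + 1) = 2 * d + 2 by omega,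
        show 2 * (k + 1 + d) + 1 - (k + 1) = k + 2 * d + 2 by omega,
        show 2 * (k + 1 + d) + 1 - 2 * (k + 1) + 1 = 2 * d + 2 by omega,
        show 2 * (k + 1 + d) + 1 - 2 * k - 1 = 2 * d + 2 by omega,
        show 2 * (k + 1 + d) + 1 - 2 * k = 2 * d + 3 by omega,
        show 2 * (k + 1 + d) + 1 - k = k + 2 * d + 3 by omega,
        show 2 * (k + 1 + d) - k = k + 2 * d + 2 by omega,
        show 2 * (k + 1 + d) - 2 * k = 2 * d + 2 by omega,
        ← mono_add, ← mono_add]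
      congr 1
      have hk2 := key k (2 * d + 1)
      rw [show k + (2 * d + 1) + 2 = k + 2 * d + 3 by omega,
        show k + (2 * d + 1) + 1 = k + 2 * d + 2 by omega,
        show 2 * d + 1 + 2 = 2 * d + 3 by omega] at hk2
      rw [choose2_succ (k + 1), pow_add]
      linear_combination q ^ ((k + 1).choose 2) * hk2 -
        q ^ ((k + 1).choose 2) * qChoose (k + 2 * d + 3) k * geom (2 * d + 3)
    rw [Finset.sum_congr rfl hmain, Finset.sum_add_distrib, Finset.sum_add_distrib, h0, hedge]
    ring
  · rw [show 2 * m + 2 + 2 = 2 * (m + 1) + 2 by ring, show 2 * m + 2 + 1 = 2 * (m + 1) + 1 by ring,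
      S_even (m + 1), S_odd (m + 1), S_even m]
    simp only [qDeriv_sum, Finset.mul_sum, X_mul_mono, qDeriv_mono, qs_mul_mono, s_mul_mono]
    conv_lhs => rw [Finset.sum_range_succ' _ (m + 1)]
    conv_rhs => rw [Finset.sum_range_succ' _ (m + 1), Finset.sum_range_succ _ (m + 1)]
    have hC : mono ((q - 1) * (qInt (2 * (m + 1) - 2 * (m + 1)) *
          (q ^ (m + 1 + 1).choose 2 * qChoose (2 * (m + 1) - (m + 1)) (m + 1)))) (m + 1 + 1)
          (2 * (m + 1) - 2 * (m + 1) - 1) = 0 := by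
      rw [show 2 * (m + 1) - 2 * (m + 1) = 0 by omega]
      simp [mono, qInt]
    have h0 : mono (q ^ (0 + 1).choose 2 * qChoose (2 * (m + 1) + 1 - 0) 0) 0 (2 * (m + 1) + 1 - 2 * 0)
        = mono (q ^ (0 + 1).choose 2 * qChoose (2 * (m + 1) - 0) 0) 0 (2 * (m + 1) - 2 * 0 + 1) := by
      rw [show 2 * (m + 1) + 1 - 0 = 2 * m + 3 by omega, show 2 * (m + 1) - 0 = 2 * m + 2 by omega,
        show 2 * m + 2 + 1 = 2 * m + 3 by omega, qChoose_zero, qChoose_zero]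
    have hmain : ∀ k ∈ Finset.range (m + 1),
        mono (q ^ (k + 1 + 1).choose 2 * qChoose (2 * (m + 1) + 1 - (k + 1)) (k + 1)) (k + 1)
          (2 * (m + 1) + 1 - 2 * (k + 1))
        = mono (q ^ (k + 1 + 1).choose 2 * qChoose (2 * (m + 1) - (k + 1)) (k + 1)) (k + 1)
            (2 * (m + 1) - 2 * (k + 1) + 1)
          + mono ((q - 1) * (qInt (2 * (m + 1) - 2 * k) * (q ^ (k + 1).choose 2 * qChoose (2 * (m + 1) - k) k)))
              (k + 1) (2 * (m + 1) - 2 * k - 1)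
          + mono (q ^ (k + 1).choose 2 * qChoose (2 * m + 1 - k) k) (k + 1) (2 * m + 1 - 2 * k) := by
      intro k hk
      rw [Finset.mem_range] at hk
      obtain ⟨d, rfl⟩ : ∃ d, m = k + d := ⟨m - k, by omega⟩
      rw [show 2 * (k + d + 1) + 1 - (k + 1) = k + 2 * d + 2 by omega,
        show 2 * (k + d + 1) + 1 - 2 * (k + 1) = 2 * d + 1 by omega,
        show 2 * (k + d + 1) - (k + 1) = k + 2 * d + 1 by omega,
        show 2 * (k + d + 1) - 2 * (k + 1) + 1 = 2 * d + 1 by omega,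
        show 2 * (k + d + 1) - 2 * k - 1 = 2 * d + 1 by omega,
        show 2 * (k + d + 1) - 2 * k = 2 * d + 2 by omega,
        show 2 * (k + d + 1) - k = k + 2 * d + 2 by omega,
        show 2 * (k + d) + 1 - k = k + 2 * d + 1 by omega,
        show 2 * (k + d) + 1 - 2 * k = 2 * d + 1 by omega,
        ← mono_add, ← mono_add]
      congr 1
      rw [choose2_succ (k + 1), pow_add]
      linear_combination q ^ ((k + 1).choose 2) * key k (2 * d) -
        q ^ ((k + 1).choose 2) * qChoose (k + 2 * d + 2) k * geom (2 * d + 2)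
    rw [Finset.sum_congr rfl hmain, Finset.sum_add_distrib, Finset.sum_add_distrib, h0, hC]
    ring

lemma qDeriv_one : qDeriv (1 : Ax) = 0 := by
  rw [qDeriv, show (1 : Ax) = Polynomial.C 1 from Polynomial.C_1.symm,
    Polynomial.sum_C_index (by simp)]
  simp [qInt]

lemma S_one : S 1 = 1 := by
  simp [S, mono, qChoose_self]

lemma S_two : S 2 = Polynomial.X := by
  have : qChoose 1 0 = 1 := qChoose_zero 1
  simp [S, mono, this]

/-- The q-Fibonacci polynomials
`F_n(x,s) = f_n(x + (q−1)s·D_q, s)·1`, i.e. `F_0 = 0`, `F_1 = 1`,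
`F_{n+2} = (x + (q−1)s·D_q)(F_{n+1}) + s·F_n`, satisfy for `n ≥ 1`
`F_n(x,s) = Σ_{k=0}^{⌊(n−1)/2⌋} q^{C(k+1,2)}·qbinom(n−1−k,k)·s^k·x^{n−1−2k}`. -/
theorem qFibonacci_explicit (F : ℕ → Ax)
    (h0 : F 0 = 0)
    (h1 : F 1 = 1)
    (hrec : ∀ n : ℕ, F (n + 2) =
      X * F (n + 1) +
        Polynomial.C ((Polynomial.C q - 1) * Polynomial.X) * qDeriv (F (n + 1)) +
        Polynomial.C Polynomial.X * F n) :
    ∀ n : ℕ, 1 ≤ n →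
      F n = ∑ k ∈ Finset.range ((n - 1) / 2 + 1),
        Polynomial.C (Polynomial.C (q ^ ((k + 1).choose 2) * qChoose (n - 1 - k) k) *
          Polynomial.X ^ k) * X ^ (n - 1 - 2 * k) := by
  have main : ∀ n : ℕ, F (n + 1) = S (n + 1) ∧ F (n + 2) = S (n + 2) := by
    intro n
    induction n with
    | zero =>
      constructor
      · rw [h1, S_one]
      · rw [hrec 0, h0, h1, S_two, qDeriv_one]
        simp
    | succ n ih =>
      refine ⟨ih.2, ?_⟩
      rw [hrec (n + 1), Srec (n + 1) (by omega), show n + 1 + 1 = n + 2 from rfl, ih.1, ih.2]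
  intro n hn
  obtain ⟨p, rfl⟩ : ∃ p, n = p + 1 := ⟨n - 1, by omega⟩
  rw [(main p).1]
  simp only [S, mono]

end
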